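/- KL divergence of an exponential tilt is the convex conjugate of the cumulant generating function evaluated at the tilted barycentre: let π be a probability measure on ℝ^d whose cumulant generating function χ(y) := log E_{x∼π}[exp(⟨y,x⟩)] is finite for every y ∈ ℝ^d. Then for every y ∈ ℝ^d the tilt T_y π has a finite barycentre and KL(T_y π ‖ π) = ⟨y, b(T_y π)⟩ − χ(y) = χ*(b(T_y π)), where χ*(x) := sup_{y∈ℝ^d} (⟨x,y⟩ − χ(y)) is the convex conjugate of χ. -/

import Mathlib

open MeasureTheory Real

/-- Real-valued Kullback-Leibler divergence `KL(ν‖ρ) = ∫ log (dν/dρ) dν`. -/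
noncomputable def klReal {α : Type*} [MeasurableSpace α] (ν ρ : Measure α) : ℝ :=
  ∫ x, Real.log ((ν.rnDeriv ρ x).toReal) ∂ν

/-- The exponential tilt `T_y μ`: the probability measure with density proportional to
`exp ⟨y, ·⟩` with respect to `μ`. -/
noncomputable def expTilt (d : ℕ) (μ : Measure (EuclideanSpace ℝ (Fin d)))
    (y : EuclideanSpace ℝ (Fin d)) : Measure (EuclideanSpace ℝ (Fin d)) :=
  μ.withDensity (fun x => ENNReal.ofReal
    (Real.exp ((inner ℝ y x : ℝ)) / ∫ x', Real.exp ((inner ℝ y x' : ℝ)) ∂μ))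

/-- The barycentre `b(μ) = E_{x∼μ}[x]` of a measure. -/
noncomputable def bary (d : ℕ) (μ : Measure (EuclideanSpace ℝ (Fin d))) :
    EuclideanSpace ℝ (Fin d) :=
  ∫ x, x ∂μ

lemma myAux1 (d : ℕ) (μ : Measure (EuclideanSpace ℝ (Fin d))) [IsProbabilityMeasure μ]
    (hint : ∀ y : EuclideanSpace ℝ (Fin d),
      Integrable (fun x => Real.exp ((inner ℝ y x : ℝ))) μ)
    (y : EuclideanSpace ℝ (Fin d)) :
    Integrable (fun x => Real.exp ((inner ℝ y x : ℝ)) • x) μ := by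
  set e : Fin d → EuclideanSpace ℝ (Fin d) := fun i => EuclideanSpace.single i 1 with he
  have hg : Integrable (fun x => ∑ i : Fin d,
      (Real.exp ((inner ℝ (y + e i) x : ℝ)) + Real.exp ((inner ℝ (y - e i) x : ℝ)))) μ := by
    apply integrable_finset_sum
    intro i _
    exact (hint (y + e i)).add (hint (y - e i))
  refine hg.mono' ?_ ?_
  · apply Continuous.aestronglyMeasurable
    exact (Real.continuous_exp.comp (continuous_const.inner continuous_id)).smul continuous_id
  · refine Filter.Eventually.of_forall (fun x => ?_)
    have hnx : ‖x‖ ≤ ∑ i : Fin d, |x i| := by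
      rw [EuclideanSpace.norm_eq]
      have h1 : ∑ i : Fin d, ‖x i‖ ^ 2 ≤ (∑ i : Fin d, ‖x i‖) ^ 2 :=
        Finset.sum_sq_le_sq_sum_of_nonneg (fun i _ => norm_nonneg _)
      calc Real.sqrt (∑ i : Fin d, ‖x i‖ ^ 2) ≤ Real.sqrt ((∑ i : Fin d, ‖x i‖) ^ 2) :=
            Real.sqrt_le_sqrt h1
        _ = ∑ i : Fin d, ‖x i‖ := Real.sqrt_sq (Finset.sum_nonneg fun i _ => norm_nonneg _)
        _ = ∑ i : Fin d, |x i| := by simp [Real.norm_eq_abs]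
    rw [norm_smul, Real.norm_eq_abs, abs_of_pos (Real.exp_pos _)]
    calc Real.exp ((inner ℝ y x : ℝ)) * ‖x‖ ≤ Real.exp ((inner ℝ y x : ℝ)) * ∑ i : Fin d, |x i| :=
          mul_le_mul_of_nonneg_left hnx (Real.exp_pos _).le
      _ = ∑ i : Fin d, Real.exp ((inner ℝ y x : ℝ)) * |x i| := by rw [Finset.mul_sum]
      _ ≤ ∑ i : Fin d, (Real.exp ((inner ℝ (y + e i) x : ℝ)) + Real.exp ((inner ℝ (y - e i) x : ℝ))) := by
          apply Finset.sum_le_sum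
          intro i _
          have hxi : (inner ℝ (e i) x : ℝ) = x i := by
            simp [he, EuclideanSpace.inner_single_left]
          have habs : |x i| ≤ Real.exp (x i) + Real.exp (-(x i)) := by
            rcases abs_cases (x i) with ⟨h, _⟩ | ⟨h, _⟩ <;>
              [ (nlinarith [Real.add_one_le_exp (x i), Real.exp_pos (-(x i))]);
                (nlinarith [Real.add_one_le_exp (-(x i)), Real.exp_pos (x i)]) ]
          calc Real.exp ((inner ℝ y x : ℝ)) * |x i|
              ≤ Real.exp ((inner ℝ y x : ℝ)) * (Real.exp (x i) + Real.exp (-(x i))) :=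
                mul_le_mul_of_nonneg_left habs (Real.exp_pos _).le
            _ = Real.exp ((inner ℝ (y + e i) x : ℝ)) + Real.exp ((inner ℝ (y - e i) x : ℝ)) := by
                rw [inner_add_left, inner_sub_left, hxi, Real.exp_add, Real.exp_sub]
                rw [mul_add]
                congr 1
                rw [Real.exp_neg, div_eq_mul_inv]

lemma myJensen {α : Type*} [MeasurableSpace α] (ν : Measure α) [IsProbabilityMeasure ν]
    {g : α → ℝ} (hg : Integrable g ν) (hexp : Integrable (fun x => Real.exp (g x)) ν) :
    ∫ x, g x ∂ν ≤ Real.log (∫ x, Real.exp (g x) ∂ν) := by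
  set m := ∫ x, g x ∂ν with hm
  have hpos : 0 < ∫ x, Real.exp (g x) ∂ν := integral_exp_pos hexp
  rw [Real.le_log_iff_exp_le hpos]
  have hle : ∀ x, Real.exp m * (1 + (g x - m)) ≤ Real.exp (g x) := by
    intro x
    have h1 : 1 + (g x - m) ≤ Real.exp (g x - m) := by
      linarith [Real.add_one_le_exp (g x - m)]
    calc Real.exp m * (1 + (g x - m)) ≤ Real.exp m * Real.exp (g x - m) :=
          mul_le_mul_of_nonneg_left h1 (Real.exp_pos _).le
      _ = Real.exp (g x) := by rw [← Real.exp_add]; ring_nf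
  have hsub : Integrable (fun x => g x - m) ν := hg.sub (integrable_const m)
  have hint1 : Integrable (fun x => Real.exp m * (1 + (g x - m))) ν := by
    apply Integrable.const_mul
    exact (integrable_const 1).add hsub
  have := integral_mono hint1 hexp hle
  have hcalc : ∫ x, Real.exp m * (1 + (g x - m)) ∂ν = Real.exp m := by
    rw [MeasureTheory.integral_const_mul]
    have h2 : ∫ x, (1 + (g x - m)) ∂ν = 1 := by
      rw [integral_add (integrable_const 1) hsub, integral_sub hg (integrable_const m)]
      simp [← hm]
    rw [h2, mul_one]
  linarith [hcalc ▸ this]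

/-- **KL divergence of an exponential tilt is the convex conjugate of the cumulant
generating function evaluated at the tilted barycentre.**  Let `μ` be a probability
measure on `ℝ^d` whose cumulant generating function `χ y = log E_μ[exp ⟨y,x⟩]` is finite
for every `y`.  Then for every `y`, the tilt `T_y μ` has a finite barycentre and
`KL(T_y μ ‖ μ) = ⟨y, b(T_y μ)⟩ - χ(y) = χ*(b(T_y μ))`, where
`χ*(x) = sup_y (⟨x,y⟩ - χ(y))`. -/
theorem kl_tilt_eq_cgf_conjugate (d : ℕ)
    (μ : Measure (EuclideanSpace ℝ (Fin d))) [IsProbabilityMeasure μ]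
    (hint : ∀ y : EuclideanSpace ℝ (Fin d),
      Integrable (fun x => Real.exp ((inner ℝ y x : ℝ))) μ)
    (χ : EuclideanSpace ℝ (Fin d) → ℝ)
    (hχ : ∀ y, χ y = Real.log (∫ x, Real.exp ((inner ℝ y x : ℝ)) ∂μ)) :
    ∀ y : EuclideanSpace ℝ (Fin d),
      Integrable (fun x => x) (expTilt d μ y) ∧
      klReal (expTilt d μ y) μ = (inner ℝ y (bary d (expTilt d μ y)) : ℝ) - χ y ∧
      klReal (expTilt d μ y) μ =
        ⨆ y' : EuclideanSpace ℝ (Fin d),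
          ((inner ℝ (bary d (expTilt d μ y)) y' : ℝ) - χ y') := by
  intro y
  have htilt : expTilt d μ y = μ.tilted (fun x => (inner ℝ y x : ℝ)) := rfl
  have hZpos : 0 < ∫ x, Real.exp ((inner ℝ y x : ℝ)) ∂μ := integral_exp_pos (hint y)
  set Z : ℝ := ∫ x, Real.exp ((inner ℝ y x : ℝ)) ∂μ with hZ
  haveI hprob : IsProbabilityMeasure (μ.tilted (fun x => (inner ℝ y x : ℝ))) :=
    isProbabilityMeasure_tilted (hint y)
  -- measurability of the density
  have hDmeas : Measurable (fun x : EuclideanSpace ℝ (Fin d) =>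
      ENNReal.ofReal (Real.exp ((inner ℝ y x : ℝ)) / Z)) := by
    apply ENNReal.measurable_ofReal.comp
    exact ((Real.continuous_exp.comp (continuous_const.inner continuous_id)).measurable).div_const _
  have hDfin : ∀ᵐ x ∂μ, ENNReal.ofReal (Real.exp ((inner ℝ y x : ℝ)) / Z) < ⊤ :=
    Filter.Eventually.of_forall fun x => ENNReal.ofReal_lt_top
  have hwd : expTilt d μ y = μ.withDensity
      (fun x => ENNReal.ofReal (Real.exp ((inner ℝ y x : ℝ)) / Z)) := rfl
  -- integrability of the identity under the tilt
  have hid : Integrable (fun x => x) (expTilt d μ y) := by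
    rw [hwd, integrable_withDensity_iff_integrable_smul' hDmeas hDfin]
    have h2 : Integrable (fun x => (Real.exp ((inner ℝ y x : ℝ)) / Z) • x) μ := by
      refine ((myAux1 d μ hint y).smul Z⁻¹).congr (Filter.Eventually.of_forall fun x => ?_)
      simp [div_eq_inv_mul, mul_smul]
    refine h2.congr (Filter.Eventually.of_forall fun x => ?_)
    simp only [ENNReal.toReal_ofReal (div_nonneg (Real.exp_pos _).le hZpos.le)]
  -- integrability of exponentials under the tilt
  have hexpt : ∀ c : EuclideanSpace ℝ (Fin d),
      Integrable (fun x => Real.exp ((inner ℝ c x : ℝ))) (expTilt d μ y) := by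
    intro c
    rw [hwd, integrable_withDensity_iff_integrable_smul' hDmeas hDfin]
    refine ((hint (y + c)).const_mul Z⁻¹).congr (Filter.Eventually.of_forall fun x => ?_)
    simp only [ENNReal.toReal_ofReal (div_nonneg (Real.exp_pos _).le hZpos.le), smul_eq_mul,
      inner_add_left, Real.exp_add]
    ring
  haveI hprob' : IsProbabilityMeasure (expTilt d μ y) := htilt ▸ hprob
  -- the KL identity
  have hb : ∫ x, x ∂(expTilt d μ y) = bary d (expTilt d μ y) := rfl
  have hkl : klReal (expTilt d μ y) μ = (inner ℝ y (bary d (expTilt d μ y)) : ℝ) - χ y := by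
    have hfint : Integrable (fun x => (inner ℝ y x : ℝ)) (expTilt d μ y) :=
      hid.const_inner y
    have hae : (fun x => Real.log (((expTilt d μ y).rnDeriv μ x).toReal))
        =ᵐ[expTilt d μ y] fun x => (inner ℝ y x : ℝ) - Real.log Z := by
      rw [htilt]
      exact (log_rnDeriv_tilted_left_self (hint y)).filter_mono
        (tilted_absolutelyContinuous μ _).ae_le
    rw [klReal, integral_congr_ae hae,
      integral_sub hfint (integrable_const _), integral_inner hid, hb,
      integral_const, probReal_univ, hχ y, one_smul, ← hZ]
  refine ⟨hid, hkl, ?_⟩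
  -- the conjugate identity
  have hbound : ∀ y' : EuclideanSpace ℝ (Fin d),
      (inner ℝ (bary d (expTilt d μ y)) y' : ℝ) - χ y'
        ≤ (inner ℝ y (bary d (expTilt d μ y)) : ℝ) - χ y := by
    intro y'
    have hgint : Integrable (fun x => (inner ℝ (y' - y) x : ℝ)) (expTilt d μ y) :=
      hid.const_inner (y' - y)
    have hgexp : Integrable (fun x => Real.exp ((inner ℝ (y' - y) x : ℝ))) (expTilt d μ y) :=
      hexpt (y' - y)
    have hJ := myJensen (expTilt d μ y) hgint hgexp
    have hZ'pos : 0 < ∫ x, Real.exp ((inner ℝ y' x : ℝ)) ∂μ := integral_exp_pos (hint y')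
    have hIg : ∫ x, (inner ℝ (y' - y) x : ℝ) ∂(expTilt d μ y)
        = (inner ℝ (y' - y) (bary d (expTilt d μ y)) : ℝ) := by
      rw [integral_inner hid, hb]
    have hIexp : ∫ x, Real.exp ((inner ℝ (y' - y) x : ℝ)) ∂(expTilt d μ y)
        = (∫ x, Real.exp ((inner ℝ y' x : ℝ)) ∂μ) / Z := by
      rw [htilt, integral_exp_tilted]
      congr 1
      apply integral_congr_ae
      refine Filter.Eventually.of_forall fun x => ?_
      simp only [Pi.add_apply]
      rw [← inner_add_left, add_sub_cancel]
    rw [hIg, hIexp, Real.log_div hZ'pos.ne' hZpos.ne'] at hJ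
    have hsplit : (inner ℝ (y' - y) (bary d (expTilt d μ y)) : ℝ)
        = (inner ℝ (bary d (expTilt d μ y)) y' : ℝ) - (inner ℝ y (bary d (expTilt d μ y)) : ℝ) := by
      rw [inner_sub_left, real_inner_comm (bary d (expTilt d μ y)) y']
    rw [hsplit] at hJ
    rw [hχ y', hχ y]
    linarith
  rw [hkl]
  refine le_antisymm ?_ ?_
  · have hy : (inner ℝ y (bary d (expTilt d μ y)) : ℝ) - χ y
        = (inner ℝ (bary d (expTilt d μ y)) y : ℝ) - χ y := by
      rw [real_inner_comm]
    rw [hy]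
    exact le_ciSup ⟨_, Set.forall_mem_range.mpr hbound⟩ y
  · exact ciSup_le hbound
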